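/- Let d, K, N be positive integers with K ≤ d and N ≥ 2, and let X_1, …, X_N ∈ ℂ^{d×K} be matrices with orthonormal columns (X_nᴴ X_n = I_K for each n). Then the squared spectral packing diameter satisfies min_{m ≠ n} (1 − ‖X_mᴴ X_n‖_{2,2}²) ≤ ((d − K)/d) · (N/(N − 1)), where ‖·‖_{2,2} denotes the spectral norm (largest singular value). -/

import Mathlib

open scoped Matrix

/-- The spectral norm `‖A‖_{2,2}` of a square complex matrix: the operator norm
induced by the Euclidean (ℓ₂) vector norm, i.e. the largest singular value. -/
noncomputable def specNorm {K : ℕ} (A : Matrix (Fin K) (Fin K) ℂ) : ℝ :=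
  ‖LinearMap.toContinuousLinearMap (Matrix.toEuclideanLin A)‖

lemma specNorm_nonneg {K : ℕ} (A : Matrix (Fin K) (Fin K) ℂ) : 0 ≤ specNorm A :=
  norm_nonneg _

/-- Frobenius norm squared is at most `K` times the spectral norm squared. -/
lemma fro_le_spec {K : ℕ} (A : Matrix (Fin K) (Fin K) ℂ) :
    ∑ i, ∑ j, ‖A i j‖ ^ 2 ≤ (K : ℝ) * specNorm A ^ 2 := by
  have hcol : ∀ j : Fin K, ∑ i, ‖A i j‖ ^ 2 ≤ specNorm A ^ 2 := by
    intro j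
    have h := (LinearMap.toContinuousLinearMap (Matrix.toEuclideanLin A)).le_opNorm
        (EuclideanSpace.single j (1 : ℂ))
    rw [EuclideanSpace.norm_single, norm_one, mul_one] at h
    have hval : (LinearMap.toContinuousLinearMap (Matrix.toEuclideanLin A))
        (EuclideanSpace.single j (1 : ℂ)) =
        (WithLp.equiv 2 (Fin K → ℂ)).symm (fun i => A i j) := by
      rw [LinearMap.coe_toContinuousLinearMap', Matrix.toEuclideanLin_apply]
      congr 1
      have : (EuclideanSpace.single j (1 : ℂ)).ofLp =
          Pi.single j (1 : ℂ) := rfl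
      rw [this, Matrix.mulVec_single]
      simp
      rfl
    rw [hval] at h
    have hnorm : ‖(WithLp.equiv 2 (Fin K → ℂ)).symm (fun i => A i j)‖ ^ 2
        = ∑ i, ‖A i j‖ ^ 2 := by
      rw [EuclideanSpace.norm_eq, Real.sq_sqrt (by positivity)]
      rfl
    calc ∑ i, ‖A i j‖ ^ 2 = _ ^ 2 := hnorm.symm
      _ ≤ specNorm A ^ 2 := by
          have := specNorm_nonneg A
          exact pow_le_pow_left₀ (norm_nonneg _) h 2
  calc ∑ i, ∑ j, ‖A i j‖ ^ 2 = ∑ j, ∑ i, ‖A i j‖ ^ 2 := Finset.sum_comm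
    _ ≤ ∑ _j : Fin K, specNorm A ^ 2 := Finset.sum_le_sum (fun j _ => hcol j)
    _ = (K : ℝ) * specNorm A ^ 2 := by simp [mul_comm]

/-- **Rankin bound for the spectral distance**: for `N ≥ 2` subspaces of `ℂ^d`, each of
dimension `K`, represented by matrices with orthonormal columns, the squared spectral
packing diameter `min_{m ≠ n} (1 − ‖X_mᴴ X_n‖_{2,2}²)` is at most
`((d−K)/d)·(N/(N−1))`. -/
theorem rankin_bound_spectral (d K N : ℕ) (hd : 0 < d) (hK : 0 < K) (hKd : K ≤ d)
    (hN : 2 ≤ N) (X : Fin N → Matrix (Fin d) (Fin K) ℂ)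
    (hX : ∀ n, (X n)ᴴ * X n = 1) :
    ∃ m n : Fin N, m ≠ n ∧
      1 - specNorm ((X m)ᴴ * X n) ^ 2 ≤
        (((d : ℝ) - K) / d) * ((N : ℝ) / ((N : ℝ) - 1)) := by
  set A : Fin N → Fin N → Matrix (Fin K) (Fin K) ℂ := fun m n => (X m)ᴴ * X n with hA
  set t : Fin N → Fin N → ℝ := fun m n => ∑ i, ∑ j, ‖A m n i j‖ ^ 2 with ht
  set S : Matrix (Fin d) (Fin d) ℂ := ∑ n, X n * (X n)ᴴ with hS
  -- diagonal values
  have ht_diag : ∀ n, t n n = (K : ℝ) := by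
    intro n
    simp only [ht, hA, hX n]
    simp [Matrix.one_apply, apply_ite]
  -- trace of P_m P_n equals t m n
  have htrace : ∀ m n, Matrix.trace ((X m * (X m)ᴴ) * (X n * (X n)ᴴ)) = (t m n : ℂ) := by
    intro m n
    have h1 : (X m * (X m)ᴴ) * (X n * (X n)ᴴ) = X m * ((A m n) * (X n)ᴴ) := by
      simp only [hA, Matrix.mul_assoc]
    have h2 : (A m n)ᴴ = (X n)ᴴ * X m := by
      simp [hA, Matrix.conjTranspose_mul]
    rw [h1, Matrix.trace_mul_comm, Matrix.mul_assoc, ← h2]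
    rw [Matrix.trace]
    push_cast [ht]
    rw [Finset.sum_congr rfl (fun i _ => ?_)]
    simp only [Matrix.diag_apply, Matrix.mul_apply, Matrix.conjTranspose_apply]
    rw [Finset.sum_congr rfl (fun j _ => ?_)]
    exact Complex.mul_conj' _
  -- trace S = N*K
  have htrS : Matrix.trace S = ((N : ℂ) * K) := by
    rw [hS, Matrix.trace_sum]
    have : ∀ n : Fin N, Matrix.trace (X n * (X n)ᴴ) = (K : ℂ) := by
      intro n
      rw [Matrix.trace_mul_comm, hX n, Matrix.trace_one]
      simp
    rw [Finset.sum_congr rfl (fun n _ => this n)]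
    simp [mul_comm]
  -- trace (S*S) = total sum of t
  have htrSS : Matrix.trace (S * S) = ((∑ m, ∑ n, t m n : ℝ) : ℂ) := by
    rw [hS, Finset.sum_mul_sum, Matrix.trace_sum]
    push_cast
    exact Finset.sum_congr rfl fun m _ => by
      rw [Matrix.trace_sum]
      exact Finset.sum_congr rfl fun n _ => htrace m n
  -- S is Hermitian
  have hherm : Sᴴ = S := by
    rw [hS, Matrix.conjTranspose_sum]
    exact Finset.sum_congr rfl fun n _ => by
      rw [Matrix.conjTranspose_mul, Matrix.conjTranspose_conjTranspose]
  -- trace (S*S) via entries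
  have htrSS' : Matrix.trace (S * S) = ((∑ i, ∑ j, ‖S i j‖ ^ 2 : ℝ) : ℂ) := by
    have hSsym : ∀ i j, S j i = (starRingEnd ℂ) (S i j) := by
      intro i j
      conv_lhs => rw [← hherm]
      simp [Matrix.conjTranspose_apply]
    rw [Matrix.trace]
    push_cast
    refine Finset.sum_congr rfl fun i _ => ?_
    simp only [Matrix.diag_apply, Matrix.mul_apply]
    refine Finset.sum_congr rfl fun j _ => ?_
    rw [hSsym i j, Complex.mul_conj']
  -- total sum of t as real
  have htot : (∑ m, ∑ n, t m n) = ∑ i, ∑ j, ‖S i j‖ ^ 2 := by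
    have := htrSS.symm.trans htrSS'
    exact_mod_cast this
  -- diagonal real parts sum
  have hdiagsum : (∑ i, (S i i).re) = (N : ℝ) * K := by
    have : (Matrix.trace S).re = ((N : ℂ) * K).re := by rw [htrS]
    rw [Matrix.trace] at this
    simpa [Complex.re_sum] using this
  -- Cauchy-Schwarz chain
  have hCS : ((N : ℝ) * K) ^ 2 ≤ (d : ℝ) * ∑ m, ∑ n, t m n := by
    have h1 : ((N : ℝ) * K) ^ 2 ≤ (d : ℝ) * ∑ i, (S i i).re ^ 2 := by
      rw [← hdiagsum]
      have := sq_sum_le_card_mul_sum_sq (s := (Finset.univ : Finset (Fin d)))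
        (f := fun i => (S i i).re)
      simpa using this
    have h2 : ∑ i, (S i i).re ^ 2 ≤ ∑ i, ‖S i i‖ ^ 2 := by
      refine Finset.sum_le_sum fun i _ => ?_
      have h := Complex.sq_norm_sub_sq_im (S i i)
      nlinarith [sq_nonneg (S i i).im]
    have h3 : ∑ i, ‖S i i‖ ^ 2 ≤ ∑ i, ∑ j, ‖S i j‖ ^ 2 := by
      refine Finset.sum_le_sum fun i _ => ?_
      exact Finset.single_le_sum (f := fun j => ‖S i j‖ ^ 2)
        (fun j _ => by positivity) (Finset.mem_univ i)
    rw [htot]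
    have hd0 : (0:ℝ) ≤ d := Nat.cast_nonneg d
    nlinarith
  -- split sum into diagonal and off-diagonal
  have hsplit : ∑ m, ∑ n, t m n
      = (N : ℝ) * K + ∑ p ∈ (Finset.univ : Finset (Fin N)).offDiag, t p.1 p.2 := by
    rw [← Finset.sum_product' (s := Finset.univ) (t := Finset.univ) (f := t),
      ← Finset.diag_union_offDiag (Finset.univ : Finset (Fin N)),
      Finset.sum_union (Finset.disjoint_diag_offDiag _), Finset.sum_diag]
    congr 1
    rw [Finset.sum_congr rfl (fun n _ => ht_diag n)]
    simp [mul_comm]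
  -- now by contradiction
  by_contra hcon
  push_neg at hcon
  set b : ℝ := ((N : ℝ) * K - d) / ((d : ℝ) * ((N : ℝ) - 1)) with hb
  have hdR : (0:ℝ) < d := by exact_mod_cast hd
  have hN1 : (1:ℝ) < N := by
    have : (2:ℝ) ≤ N := by exact_mod_cast hN
    linarith
  have hd0 : (d:ℝ) ≠ 0 := ne_of_gt hdR
  have hN0 : (N:ℝ) - 1 ≠ 0 := by linarith
  -- every off-diagonal t is < K * b
  have hlt : ∀ p ∈ (Finset.univ : Finset (Fin N)).offDiag, t p.1 p.2 < (K : ℝ) * b := by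
    intro p hp
    rw [Finset.mem_offDiag] at hp
    have hcp := hcon p.1 p.2 hp.2.2
    have hspec : specNorm (A p.1 p.2) ^ 2 < b := by
      have heq : 1 - b = (((d : ℝ) - K) / d) * ((N : ℝ) / ((N : ℝ) - 1)) := by
        rw [hb]; field_simp [hd0, hN0]; ring
      have : 1 - specNorm (A p.1 p.2) ^ 2 > 1 - b := by
        rw [heq]; exact hcp
      linarith
    have hfro := fro_le_spec (A p.1 p.2)
    have hKpos : (0:ℝ) < K := by exact_mod_cast hK
    calc t p.1 p.2 ≤ (K : ℝ) * specNorm (A p.1 p.2) ^ 2 := hfro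
      _ < (K : ℝ) * b := by exact mul_lt_mul_of_pos_left hspec hKpos
  -- off-diagonal is nonempty
  have hne : ((Finset.univ : Finset (Fin N)).offDiag).Nonempty := by
    refine ⟨(⟨0, by omega⟩, ⟨1, by omega⟩), ?_⟩
    rw [Finset.mem_offDiag]
    refine ⟨Finset.mem_univ _, Finset.mem_univ _, ?_⟩
    intro h
    have := congrArg Fin.val h
    simp at this
  -- sum bound
  have hsumlt : ∑ p ∈ (Finset.univ : Finset (Fin N)).offDiag, t p.1 p.2
      < ((Finset.univ : Finset (Fin N)).offDiag.card : ℝ) * ((K : ℝ) * b) := by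
    calc ∑ p ∈ (Finset.univ : Finset (Fin N)).offDiag, t p.1 p.2
        < ∑ _p ∈ (Finset.univ : Finset (Fin N)).offDiag, (K : ℝ) * b :=
          Finset.sum_lt_sum_of_nonempty hne hlt
      _ = _ := by rw [Finset.sum_const, nsmul_eq_mul]
  have hcard : (((Finset.univ : Finset (Fin N)).offDiag.card : ℝ))
      = (N : ℝ) * N - N := by
    have h1 : N ≤ N * N := Nat.le_mul_of_pos_left N (by omega)
    have h2 : (Finset.univ : Finset (Fin N)).offDiag.card = N * N - N := by
      rw [Finset.offDiag_card]; simp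
    rw [h2, Nat.cast_sub h1, Nat.cast_mul]
  rw [hcard] at hsumlt
  -- contradiction via arithmetic
  have hkey : ((N : ℝ) * N - N) * ((K : ℝ) * b) = ((N : ℝ) * K) ^ 2 / d - (N : ℝ) * K := by
    rw [hb]
    field_simp [hd0, hN0]
  rw [hkey] at hsumlt
  have hlow : ((N : ℝ) * K) ^ 2 / d - (N : ℝ) * K
      ≤ ∑ p ∈ (Finset.univ : Finset (Fin N)).offDiag, t p.1 p.2 := by
    have : ((N : ℝ) * K) ^ 2 / d ≤ ∑ m, ∑ n, t m n := by
      rw [div_le_iff₀ hdR]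
      nlinarith
    rw [hsplit] at this
    linarith
  linarith
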